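/- Let H = (V,E,w) be an edge-weighted hypergraph, let k ≥ 1, and let u_i ∈ ℝ^k for i ∈ V be arbitrary vectors. Let S ⊆ V contain at least one vertex i with u_i ≠ 0. Define μ(S) := Σ_{i ∈ S} w_i ‖u_i‖² and ν(S) := Σ_{e ∈ E : e ⊆ S} w_e · (max_{i ∈ e} ‖u_i‖² − min_{i ∈ e} ‖u_i‖²) + Σ_{e ∈ ∂S} w_e · max_{i ∈ S ∩ e} ‖u_i‖², and for r > 0 let S_r := {i ∈ S : ‖u_i‖² ≥ r}. Then there exists r > 0 such that S_r ≠ ∅ and φ(S_r) ≤ ν(S)/μ(S). -/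

import Mathlib

open Finset

/-- An edge-weighted hypergraph on a finite vertex set `V`: a finite set of hyperedges,
each a nonempty subset of `V`, with positive weights. -/
structure WHypergraph (V : Type*) [Fintype V] [DecidableEq V] where
  E : Finset (Finset V)
  w : Finset V → ℝ
  edge_nonempty : ∀ e ∈ E, e.Nonempty
  w_pos : ∀ e ∈ E, 0 < w e

namespace WHypergraph

variable {V : Type*} [Fintype V] [DecidableEq V]

/-- The weight of a vertex: total weight of hyperedges containing it. -/
noncomputable def wv (H : WHypergraph V) (v : V) : ℝ :=
  ∑ e ∈ H.E.filter (fun e => v ∈ e), H.w e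

/-- The weight of a set of vertices. -/
noncomputable def wS (H : WHypergraph V) (S : Finset V) : ℝ := ∑ v ∈ S, H.wv v

/-- The boundary of `S`: hyperedges meeting both `S` and its complement. -/
noncomputable def bdry (H : WHypergraph V) (S : Finset V) : Finset (Finset V) :=
  H.E.filter (fun e => (e ∩ S).Nonempty ∧ (e \ S).Nonempty)

/-- The expansion `φ(S)` of a set of vertices. -/
noncomputable def phi (H : WHypergraph V) (S : Finset V) : ℝ :=
  (∑ e ∈ H.bdry S, H.w e) / H.wS S

/-- `max_{u,v ∈ e} (f u - f v)^2`. -/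
noncomputable def edgeDisc (H : WHypergraph V) (f : V → ℝ) (e : Finset V) : ℝ :=
  sSup {x : ℝ | ∃ u ∈ e, ∃ v ∈ e, (f u - f v) ^ 2 = x}

/-- The discrepancy ratio `D_w(f)`. -/
noncomputable def disc (H : WHypergraph V) (f : V → ℝ) : ℝ :=
  (∑ e ∈ H.E, H.w e * H.edgeDisc f e) / ∑ u : V, H.wv u * f u ^ 2

/-- The weighted inner product `⟨f,g⟩_w`. -/
noncomputable def wip (H : WHypergraph V) (f g : V → ℝ) : ℝ :=
  ∑ u : V, H.wv u * f u * g u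

/-- `γ₂`: infimum of the discrepancy ratio over nonzero `f ⊥_w 1`. -/
noncomputable def gamma2 (H : WHypergraph V) : ℝ :=
  sInf {x : ℝ | ∃ f : V → ℝ, f ≠ 0 ∧ H.wip f (fun _ => 1) = 0 ∧ H.disc f = x}

/-- The hypergraph expansion `φ_H`. -/
noncomputable def phiH (H : WHypergraph V) : ℝ :=
  sInf {x : ℝ | ∃ S : Finset V, S.Nonempty ∧ S ≠ univ ∧
    x = max (H.phi S) (H.phi Sᶜ)}

/-- `ζ_k`: inf over `k`-tuples of nonzero pairwise `w`-orthogonal vectors of the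
sup of the discrepancy ratio over nonzero vectors in their span. -/
noncomputable def zeta (H : WHypergraph V) (k : ℕ) : ℝ :=
  sInf {x : ℝ | ∃ f : Fin k → V → ℝ, (∀ i, f i ≠ 0) ∧
    (∀ i j, i ≠ j → H.wip (f i) (f j) = 0) ∧
    x = sSup {y : ℝ | ∃ h : V → ℝ, h ≠ 0 ∧
      h ∈ Submodule.span ℝ (Set.range f) ∧ H.disc h = y}}

/-- `ξ_k`: inf over `k`-tuples of nonzero pairwise `w`-orthogonal vectors of the
maximum discrepancy ratio among them. -/
noncomputable def xi (H : WHypergraph V) (k : ℕ) : ℝ :=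
  sInf {x : ℝ | ∃ f : Fin k → V → ℝ, (∀ i, f i ≠ 0) ∧
    (∀ i j, i ≠ j → H.wip (f i) (f j) = 0) ∧
    x = sSup {y : ℝ | ∃ i, H.disc (f i) = y}}

/-- A sequence of procedural minimizers: `f 0` is a nonzero constant vector, each `f i`
is nonzero and `w`-orthogonal to the previous ones, and attains the infimum of the
discrepancy ratio over nonzero vectors `w`-orthogonal to the previous ones. -/
def IsProcMin (H : WHypergraph V) {k : ℕ} (f : Fin k → V → ℝ) : Prop :=
  (∀ i, f i ≠ 0) ∧
  (∀ i : Fin k, (i : ℕ) = 0 → ∃ c : ℝ, f i = fun _ => c) ∧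
  (∀ i j : Fin k, (j : ℕ) < (i : ℕ) → H.wip (f i) (f j) = 0) ∧
  (∀ i : Fin k, 0 < (i : ℕ) → H.disc (f i) =
    sInf {x : ℝ | ∃ g : V → ℝ, g ≠ 0 ∧
      (∀ j : Fin k, (j : ℕ) < (i : ℕ) → H.wip g (f j) = 0) ∧ H.disc g = x})

end WHypergraph

lemma telescope_key (q : ℕ → ℝ) (m : ℕ) (hstep : ∀ j, j < m → q j < q (j+1))
    (h0 : q 0 = 0) (a : ℝ) (l : ℕ) (hl : l ≤ m) (hla : q l = a) :
    ∑ j ∈ Finset.range m, (q (j+1) - q j) * (if q (j+1) ≤ a then 1 else 0) = a := by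
  have hmono : ∀ i j, i ≤ j → j ≤ m → q i ≤ q j := by
    intro i j hij hjm
    induction j with
    | zero => simp_all
    | succ n ih =>
      rcases Nat.lt_or_ge i (n+1) with h | h
      · exact le_trans (ih (Nat.lt_succ_iff.mp h) (le_trans (Nat.le_succ n) hjm))
          (le_of_lt (hstep n (Nat.lt_of_succ_le hjm)))
      · have : i = n + 1 := le_antisymm hij h
        simp [this]
  have key : ∀ j, j < m → (q (j+1) - q j) * (if q (j+1) ≤ a then 1 else 0)
      = min (q (j+1)) a - min (q j) a := by
    intro j hj
    by_cases h : q (j+1) ≤ a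
    · have h1 : q j ≤ a := le_trans (le_of_lt (hstep j hj)) h
      rw [if_pos h, min_eq_left h, min_eq_left h1]
      ring
    · rw [if_neg h, mul_zero]
      by_cases h2 : a ≤ q j
      · have h3 : a ≤ q (j+1) := le_trans h2 (le_of_lt (hstep j hj))
        rw [min_eq_right h3, min_eq_right h2, sub_self]
      · exfalso
        push_neg at h2
        have hjl : j < l := by
          by_contra hc
          push_neg at hc
          exact absurd (hla ▸ hmono l j hc (le_of_lt hj)) (not_le.mpr h2)
        exact h (hla ▸ hmono (j+1) l hjl hl)
  calc ∑ j ∈ Finset.range m, (q (j+1) - q j) * (if q (j+1) ≤ a then 1 else 0)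
      = ∑ j ∈ Finset.range m, (min (q (j+1)) a - min (q j) a) :=
        Finset.sum_congr rfl fun j hj => key j (Finset.mem_range.mp hj)
    _ = min (q m) a - min (q 0) a := Finset.sum_range_sub (fun j => min (q j) a) m
    _ = a := by
        have h1 : a ≤ q m := hla ▸ hmono l m hl le_rfl
        have h2 : 0 ≤ a := hla ▸ h0 ▸ hmono 0 l (Nat.zero_le l) hl
        rw [min_eq_right h1, h0, min_eq_left h2, sub_zero]


/-- Sweep cut on the level sets of `‖u_i‖²`: for any vectors `u_i ∈ ℝ^k` and any set `S`
containing a vertex with `u_i ≠ 0`, there is `r > 0` such that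
`S_r := {i ∈ S : ‖u_i‖² ≥ r}` is nonempty and `φ(S_r) ≤ ν(S)/μ(S)`, where
`μ(S) = Σ_{i∈S} w_i ‖u_i‖²` and
`ν(S) = Σ_{e⊆S} w_e (max_{i∈e}‖u_i‖² − min_{i∈e}‖u_i‖²) + Σ_{e∈∂S} w_e max_{i∈S∩e}‖u_i‖²`. -/
theorem sweep_cut_mu_nu {V : Type*} [Fintype V] [DecidableEq V]
    (H : WHypergraph V) (hw : ∀ v : V, 0 < H.wv v)
    (k : ℕ) (u : V → Fin k → ℝ) (S : Finset V)
    (hS : ∃ i ∈ S, u i ≠ 0) :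
    ∃ r : ℝ, 0 < r ∧
      (S.filter fun i => r ≤ ∑ s : Fin k, u i s ^ 2).Nonempty ∧
      H.phi (S.filter fun i => r ≤ ∑ s : Fin k, u i s ^ 2) ≤
        ((∑ e ∈ H.E.filter (fun e => e ⊆ S), H.w e *
            (sSup {y : ℝ | ∃ i ∈ e, (∑ s : Fin k, u i s ^ 2) = y} -
              sInf {y : ℝ | ∃ i ∈ e, (∑ s : Fin k, u i s ^ 2) = y})) +
          ∑ e ∈ H.bdry S, H.w e *
            sSup {y : ℝ | ∃ i ∈ S ∩ e, (∑ s : Fin k, u i s ^ 2) = y}) /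
        ∑ i ∈ S, H.wv i * ∑ s : Fin k, u i s ^ 2 := by
  classical
  set g : V → ℝ := fun i => ∑ s : Fin k, u i s ^ 2 with hgdef
  obtain ⟨i0, hi0S, hi0⟩ := hS
  have hgnn : ∀ i, 0 ≤ g i := fun i => Finset.sum_nonneg fun s _ => sq_nonneg _
  have hg0 : 0 < g i0 := by
    obtain ⟨s, hs⟩ := Function.ne_iff.mp hi0
    exact Finset.sum_pos' (fun t _ => sq_nonneg _)
      ⟨s, Finset.mem_univ s, pow_two_pos_of_ne_zero hs⟩
  -- sorted positive values
  set T : Finset ℝ := (S.image g).filter (fun x => 0 < x) with hTdef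
  have hTmem : g i0 ∈ T := Finset.mem_filter.mpr ⟨Finset.mem_image_of_mem g hi0S, hg0⟩
  set L : List ℝ := T.sort (· ≤ ·) with hLdef
  set m : ℕ := L.length with hmdef
  have hm : 0 < m := by
    rw [hmdef, hLdef, Finset.length_sort]
    exact Finset.card_pos.mpr ⟨_, hTmem⟩
  set q : ℕ → ℝ := fun j => (0 :: L).getD j 0 with hqdef
  have hq0 : q 0 = 0 := rfl
  have hqget : ∀ (j : ℕ) (hj : j < m), q (j+1) = L.get ⟨j, hj⟩ := by
    intro j hj
    show (0 :: L).getD (j+1) 0 = _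
    rw [List.getD_cons_succ]
    exact List.getD_eq_get L 0 ⟨j, hj⟩
  have hqT : ∀ j, j < m → q (j+1) ∈ T := by
    intro j hj
    rw [hqget j hj]
    exact (Finset.mem_sort (α := ℝ) (· ≤ ·)).mp (List.get_mem L ⟨j, hj⟩)
  have hstep : ∀ j, j < m → q j < q (j+1) := by
    intro j hj
    match j with
    | 0 =>
      rw [hq0]
      exact (Finset.mem_filter.mp (hqT 0 hj)).2
    | Nat.succ i =>
      have hi : i < m := Nat.lt_of_succ_lt hj
      rw [hqget i hi, hqget (i+1) hj]
      exact (Finset.sortedLT_sort T).strictMono_get (by simp)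
  have hmono : ∀ i j, i ≤ j → j ≤ m → q i ≤ q j := by
    intro i j hij hjm
    induction j with
    | zero => simp_all
    | succ n ih =>
      rcases Nat.lt_or_ge i (n+1) with h | h
      · exact le_trans (ih (Nat.lt_succ_iff.mp h) (le_trans (Nat.le_succ n) hjm))
          (le_of_lt (hstep n (Nat.lt_of_succ_le hjm)))
      · have : i = n + 1 := le_antisymm hij h
        simp [this]
  have hmemT : ∀ a ∈ T, ∃ l ≤ m, q l = a := by
    intro a ha
    have : a ∈ L := (Finset.mem_sort _).mpr ha
    obtain ⟨⟨n, hn⟩, hna⟩ := List.mem_iff_get.mp this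
    exact ⟨n + 1, hn, by rw [hqget n hn]; exact hna⟩
  have keyfun : ∀ a : ℝ, (a = 0 ∨ a ∈ T) →
      ∑ j ∈ Finset.range m, (q (j+1) - q j) * (if q (j+1) ≤ a then 1 else 0) = a := by
    rintro a (rfl | ha)
    · exact telescope_key q m hstep hq0 0 0 (Nat.zero_le m) hq0
    · obtain ⟨l, hl, hla⟩ := hmemT a ha
      exact telescope_key q m hstep hq0 a l hl hla
  have keymem : ∀ i ∈ S, (g i = 0 ∨ g i ∈ T) := by
    intro i hi
    rcases eq_or_lt_of_le (hgnn i) with h | h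
    · exact Or.inl h.symm
    · exact Or.inr (Finset.mem_filter.mpr ⟨Finset.mem_image_of_mem g hi, h⟩)
  -- abbreviations
  set μ : ℝ := ∑ i ∈ S, H.wv i * g i with hμdef
  have hμ : 0 < μ :=
    Finset.sum_pos' (fun i hi => mul_nonneg (le_of_lt (hw i)) (hgnn i))
      ⟨i0, hi0S, mul_pos (hw i0) hg0⟩
  set Sr : ℝ → Finset V := fun t => S.filter (fun i => t ≤ g i) with hSrdef
  set A : ℕ → ℝ := fun j => ∑ e ∈ H.bdry (Sr (q (j+1))), H.w e with hAdef
  set B : ℕ → ℝ := fun j => H.wS (Sr (q (j+1))) with hBdef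
  -- claim B
  have claimB : ∑ j ∈ Finset.range m, (q (j+1) - q j) * B j = μ := by
    have hBj : ∀ j, B j = ∑ i ∈ S, (if q (j+1) ≤ g i then H.wv i else 0) := by
      intro j
      rw [hBdef]
      simp only [WHypergraph.wS, hSrdef, Finset.sum_filter]
    calc ∑ j ∈ Finset.range m, (q (j+1) - q j) * B j
        = ∑ j ∈ Finset.range m, ∑ i ∈ S,
            (q (j+1) - q j) * (if q (j+1) ≤ g i then 1 else 0) * H.wv i := by
          refine Finset.sum_congr rfl fun j _ => ?_
          rw [hBj j, Finset.mul_sum]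
          exact Finset.sum_congr rfl fun i _ => by split_ifs <;> ring
      _ = ∑ i ∈ S, (∑ j ∈ Finset.range m,
            (q (j+1) - q j) * (if q (j+1) ≤ g i then 1 else 0)) * H.wv i := by
          rw [Finset.sum_comm]
          exact Finset.sum_congr rfl fun i _ => by rw [Finset.sum_mul]
      _ = μ := by
          rw [hμdef]
          exact Finset.sum_congr rfl fun i hi => by
            rw [keyfun (g i) (keymem i hi), mul_comm]
  -- sSup of image sets
  have hseteq : ∀ t : Finset V, {y : ℝ | ∃ i ∈ t, g i = y} = ↑(t.image g) := by
    intro t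
    ext y
    simp [Finset.mem_image, eq_comm]
  have hsup : ∀ (t : Finset V) (ht : (t.image g).Nonempty),
      sSup {y : ℝ | ∃ i ∈ t, g i = y} = (t.image g).max' ht := by
    intro t ht
    rw [hseteq t]
    exact ht.csSup_eq_max'
  have hinf : ∀ (t : Finset V) (ht : (t.image g).Nonempty),
      sInf {y : ℝ | ∃ i ∈ t, g i = y} = (t.image g).min' ht := by
    intro t ht
    rw [hseteq t]
    exact ht.csInf_eq_min'
  -- characterization of nonemptiness thresholds
  have hexle : ∀ (t : Finset V) (ht : (t.image g).Nonempty) (r : ℝ),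
      (∃ i ∈ t, r ≤ g i) ↔ r ≤ (t.image g).max' ht := by
    intro t ht r
    constructor
    · rintro ⟨i, hi, hr⟩
      exact le_trans hr (Finset.le_max' _ _ (Finset.mem_image_of_mem g hi))
    · intro hr
      obtain ⟨i, hi, hgi⟩ := Finset.mem_image.mp ((t.image g).max'_mem ht)
      exact ⟨i, hi, hgi.symm ▸ hr⟩
  have hexlt : ∀ (t : Finset V) (ht : (t.image g).Nonempty) (r : ℝ),
      (∃ i ∈ t, g i < r) ↔ (t.image g).min' ht < r := by
    intro t ht r
    constructor
    · rintro ⟨i, hi, hr⟩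
      exact lt_of_le_of_lt (Finset.min'_le _ _ (Finset.mem_image_of_mem g hi)) hr
    · intro hr
      obtain ⟨i, hi, hgi⟩ := Finset.mem_image.mp ((t.image g).min'_mem ht)
      exact ⟨i, hi, hgi.symm ▸ hr⟩
  -- the target ν
  set ν : ℝ := (∑ e ∈ H.E.filter (fun e => e ⊆ S), H.w e *
        (sSup {y : ℝ | ∃ i ∈ e, g i = y} - sInf {y : ℝ | ∃ i ∈ e, g i = y})) +
      ∑ e ∈ H.bdry S, H.w e * sSup {y : ℝ | ∃ i ∈ S ∩ e, g i = y} with hνdef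
  -- claim A
  have claimA : ∑ j ∈ Finset.range m, (q (j+1) - q j) * A j = ν := by
    have hAj : ∀ j, A j = ∑ e ∈ H.E,
        (if (e ∩ Sr (q (j+1))).Nonempty ∧ (e \ Sr (q (j+1))).Nonempty
          then H.w e else 0) := by
      intro j
      rw [hAdef]
      simp only [WHypergraph.bdry, Finset.sum_filter]
    have swap : ∑ j ∈ Finset.range m, (q (j+1) - q j) * A j =
        ∑ e ∈ H.E, H.w e * ∑ j ∈ Finset.range m, (q (j+1) - q j) *
          (if (e ∩ Sr (q (j+1))).Nonempty ∧ (e \ Sr (q (j+1))).Nonempty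
            then 1 else 0) := by
      calc ∑ j ∈ Finset.range m, (q (j+1) - q j) * A j
          = ∑ j ∈ Finset.range m, ∑ e ∈ H.E, H.w e * ((q (j+1) - q j) *
              (if (e ∩ Sr (q (j+1))).Nonempty ∧ (e \ Sr (q (j+1))).Nonempty
                then 1 else 0)) := by
            refine Finset.sum_congr rfl fun j _ => ?_
            rw [hAj j, Finset.mul_sum]
            exact Finset.sum_congr rfl fun e _ => by split_ifs <;> ring
        _ = _ := by
            rw [Finset.sum_comm]
            exact Finset.sum_congr rfl fun e _ => by rw [Finset.mul_sum]
    rw [swap]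
    -- pointwise computation of inner sums
    -- case analysis on e
    have memSr : ∀ (r : ℝ) (i : V), i ∈ Sr r ↔ i ∈ S ∧ r ≤ g i := by
      intro r i
      simp [hSrdef]
    have caseB : ∀ e, (e ∩ S).Nonempty → (e \ S).Nonempty →
        ∑ j ∈ Finset.range m, (q (j+1) - q j) *
          (if (e ∩ Sr (q (j+1))).Nonempty ∧ (e \ Sr (q (j+1))).Nonempty
            then 1 else 0) = sSup {y : ℝ | ∃ i ∈ S ∩ e, g i = y} := by
      intro e he1 he2
      have hSe : (S ∩ e).Nonempty := by
        obtain ⟨i, hi⟩ := he1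
        exact ⟨i, Finset.mem_inter.mpr ⟨(Finset.mem_inter.mp hi).2, (Finset.mem_inter.mp hi).1⟩⟩
      have hSei : ((S ∩ e).image g).Nonempty := hSe.image g
      have hcond : ∀ r : ℝ, ((e ∩ Sr r).Nonempty ∧ (e \ Sr r).Nonempty) ↔
          r ≤ ((S ∩ e).image g).max' hSei := by
        intro r
        constructor
        · rintro ⟨⟨i, hi⟩, -⟩
          obtain ⟨hie, hiS, hr⟩ : i ∈ e ∧ i ∈ S ∧ r ≤ g i := by
            have := Finset.mem_inter.mp hi
            exact ⟨this.1, ((memSr r i).mp this.2).1, ((memSr r i).mp this.2).2⟩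
          exact (hexle (S ∩ e) hSei r).mp ⟨i, Finset.mem_inter.mpr ⟨hiS, hie⟩, hr⟩
        · intro hr
          obtain ⟨i, hi, hri⟩ := (hexle (S ∩ e) hSei r).mpr hr
          obtain ⟨hiS, hie⟩ := Finset.mem_inter.mp hi
          constructor
          · exact ⟨i, Finset.mem_inter.mpr ⟨hie, (memSr r i).mpr ⟨hiS, hri⟩⟩⟩
          · obtain ⟨x, hx⟩ := he2
            obtain ⟨hxe, hxS⟩ := Finset.mem_sdiff.mp hx
            exact ⟨x, Finset.mem_sdiff.mpr ⟨hxe, fun hc => hxS ((memSr r x).mp hc).1⟩⟩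
      have hMT : ((S ∩ e).image g).max' hSei = 0 ∨ ((S ∩ e).image g).max' hSei ∈ T := by
        obtain ⟨i, hi, hgi⟩ := Finset.mem_image.mp (((S ∩ e).image g).max'_mem hSei)
        rw [← hgi]
        exact keymem i (Finset.mem_inter.mp hi).1
      rw [hsup (S ∩ e) hSei, ← keyfun _ hMT]
      refine Finset.sum_congr rfl fun j _ => ?_
      congr 1
      exact if_congr (hcond (q (j+1))) rfl rfl
    have caseA : ∀ e ∈ H.E, e ⊆ S →
        ∑ j ∈ Finset.range m, (q (j+1) - q j) *
          (if (e ∩ Sr (q (j+1))).Nonempty ∧ (e \ Sr (q (j+1))).Nonempty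
            then 1 else 0) =
        sSup {y : ℝ | ∃ i ∈ e, g i = y} - sInf {y : ℝ | ∃ i ∈ e, g i = y} := by
      intro e heE heS
      have hene : e.Nonempty := H.edge_nonempty e heE
      have hei : (e.image g).Nonempty := hene.image g
      have hmile : (e.image g).min' hei ≤ (e.image g).max' hei :=
        Finset.min'_le _ _ ((e.image g).max'_mem hei)
      have hcond : ∀ r : ℝ, ((e ∩ Sr r).Nonempty ∧ (e \ Sr r).Nonempty) ↔
          (r ≤ (e.image g).max' hei ∧ (e.image g).min' hei < r) := by
        intro r
        constructor
        · rintro ⟨⟨i, hi⟩, ⟨x, hx⟩⟩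
          obtain ⟨hie, hiSr⟩ := Finset.mem_inter.mp hi
          obtain ⟨hxe, hxSr⟩ := Finset.mem_sdiff.mp hx
          have h1 := (hexle e hei r).mp ⟨i, hie, ((memSr r i).mp hiSr).2⟩
          have h2 : (e.image g).min' hei < r := by
            refine (hexlt e hei r).mp ⟨x, hxe, ?_⟩
            by_contra hc
            exact hxSr ((memSr r x).mpr ⟨heS hxe, not_lt.mp hc⟩)
          exact ⟨h1, h2⟩
        · rintro ⟨h1, h2⟩
          obtain ⟨i, hi, hri⟩ := (hexle e hei r).mpr h1
          obtain ⟨x, hx, hrx⟩ := (hexlt e hei r).mpr h2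
          constructor
          · exact ⟨i, Finset.mem_inter.mpr ⟨hi, (memSr r i).mpr ⟨heS hi, hri⟩⟩⟩
          · exact ⟨x, Finset.mem_sdiff.mpr ⟨hx,
              fun hc => absurd ((memSr r x).mp hc).2 (not_le.mpr hrx)⟩⟩
      have hMT : (e.image g).max' hei = 0 ∨ (e.image g).max' hei ∈ T := by
        obtain ⟨i, hi, hgi⟩ := Finset.mem_image.mp ((e.image g).max'_mem hei)
        rw [← hgi]; exact keymem i (heS hi)
      have hmiT : (e.image g).min' hei = 0 ∨ (e.image g).min' hei ∈ T := by
        obtain ⟨i, hi, hgi⟩ := Finset.mem_image.mp ((e.image g).min'_mem hei)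
        rw [← hgi]; exact keymem i (heS hi)
      rw [hsup e hei, hinf e hei, ← keyfun _ hMT, ← keyfun _ hmiT,
        ← Finset.sum_sub_distrib]
      refine Finset.sum_congr rfl fun j _ => ?_
      rw [if_congr (hcond (q (j+1))) rfl rfl]
      by_cases h2 : q (j+1) ≤ (e.image g).max' hei
      · by_cases h3 : q (j+1) ≤ (e.image g).min' hei
        · rw [if_neg (fun hc => absurd hc.2 (not_lt.mpr h3)), if_pos h2, if_pos h3]; ring
        · rw [if_pos ⟨h2, not_le.mp h3⟩, if_pos h2, if_neg h3]; ring
      · have h3 : ¬ q (j+1) ≤ (e.image g).min' hei := fun hc => h2 (le_trans hc hmile)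
        rw [if_neg (fun hc => h2 hc.1), if_neg h2, if_neg h3]; ring
    have caseC : ∀ e, (e ∩ S) = ∅ →
        ∑ j ∈ Finset.range m, (q (j+1) - q j) *
          (if (e ∩ Sr (q (j+1))).Nonempty ∧ (e \ Sr (q (j+1))).Nonempty
            then 1 else 0) = 0 := by
      intro e he
      refine Finset.sum_eq_zero fun j _ => ?_
      have : ¬ (e ∩ Sr (q (j+1))).Nonempty := by
        rintro ⟨i, hi⟩
        obtain ⟨hie, hiSr⟩ := Finset.mem_inter.mp hi
        have : i ∈ e ∩ S := Finset.mem_inter.mpr ⟨hie, ((memSr _ i).mp hiSr).1⟩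
        simp [he] at this
      rw [if_neg (fun hc => this hc.1), mul_zero]
    -- now split the sum over E
    rw [← Finset.sum_filter_add_sum_filter_not H.E (fun e => e ⊆ S)]
    rw [hνdef]
    congr 1
    · exact Finset.sum_congr rfl fun e he => by
        obtain ⟨heE, heS⟩ := Finset.mem_filter.mp he
        rw [caseA e heE heS]
    · -- edges not contained in S
      rw [← Finset.sum_filter_add_sum_filter_not (H.E.filter (fun e => ¬ e ⊆ S))
          (fun e => (e ∩ S).Nonempty)]
      have h2 : ∑ e ∈ (H.E.filter (fun e => ¬ e ⊆ S)).filter (fun e => ¬ (e ∩ S).Nonempty),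
          H.w e * ∑ j ∈ Finset.range m, (q (j+1) - q j) *
          (if (e ∩ Sr (q (j+1))).Nonempty ∧ (e \ Sr (q (j+1))).Nonempty
            then 1 else 0) = 0 := by
        refine Finset.sum_eq_zero fun e he => ?_
        have hne := (Finset.mem_filter.mp he).2
        rw [caseC e (Finset.not_nonempty_iff_eq_empty.mp hne), mul_zero]
      rw [h2, add_zero]
      have hsetbd : (H.E.filter (fun e => ¬ e ⊆ S)).filter (fun e => (e ∩ S).Nonempty) =
          H.bdry S := by
        rw [WHypergraph.bdry, Finset.filter_filter]
        exact Finset.filter_congr fun e _ => by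
          rw [← Finset.sdiff_nonempty]
          tauto
      rw [hsetbd]
      exact Finset.sum_congr rfl fun e he => by
        obtain ⟨heE, he1, he2⟩ := Finset.mem_filter.mp he
        rw [caseB e he1 he2]
  -- existence of a good index
  have hex : ∃ j ∈ Finset.range m, A j * μ ≤ ν * B j := by
    by_contra hc
    push_neg at hc
    have hlt : ∑ j ∈ Finset.range m, (q (j+1) - q j) * (ν * B j) <
        ∑ j ∈ Finset.range m, (q (j+1) - q j) * (A j * μ) := by
      refine Finset.sum_lt_sum_of_nonempty ⟨0, Finset.mem_range.mpr hm⟩ fun j hj => ?_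
      have hΔ : 0 < q (j+1) - q j := sub_pos.mpr (hstep j (Finset.mem_range.mp hj))
      exact mul_lt_mul_of_pos_left (hc j hj) hΔ
    have hL : ∑ j ∈ Finset.range m, (q (j+1) - q j) * (ν * B j) = ν * μ := by
      calc ∑ j ∈ Finset.range m, (q (j+1) - q j) * (ν * B j)
          = ν * ∑ j ∈ Finset.range m, (q (j+1) - q j) * B j := by
            rw [Finset.mul_sum]
            exact Finset.sum_congr rfl fun j _ => by ring
        _ = ν * μ := by rw [claimB]
    have hR : ∑ j ∈ Finset.range m, (q (j+1) - q j) * (A j * μ) = ν * μ := by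
      calc ∑ j ∈ Finset.range m, (q (j+1) - q j) * (A j * μ)
          = (∑ j ∈ Finset.range m, (q (j+1) - q j) * A j) * μ := by
            rw [Finset.sum_mul]
            exact Finset.sum_congr rfl fun j _ => by ring
        _ = ν * μ := by rw [claimA]
    rw [hL, hR] at hlt
    exact lt_irrefl _ hlt
  obtain ⟨j, hjm, hle⟩ := hex
  have hjm' : j < m := Finset.mem_range.mp hjm
  refine ⟨q (j+1), ?_, ?_, ?_⟩
  · calc (0:ℝ) = q 0 := hq0.symm
      _ ≤ q j := hmono 0 j (Nat.zero_le j) (le_of_lt hjm')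
      _ < q (j+1) := hstep j hjm'
  · obtain ⟨i, hiT, hgi⟩ := Finset.mem_image.mp (Finset.mem_filter.mp (hqT j hjm')).1
    exact ⟨i, Finset.mem_filter.mpr ⟨hiT, le_of_eq hgi.symm⟩⟩
  · have hBpos : 0 < B j := by
      rw [hBdef]
      obtain ⟨i, hiT, hgi⟩ := Finset.mem_image.mp (Finset.mem_filter.mp (hqT j hjm')).1
      exact Finset.sum_pos' (fun v _ => le_of_lt (hw v))
        ⟨i, Finset.mem_filter.mpr ⟨hiT, le_of_eq hgi.symm⟩, hw i⟩
    have hphi : H.phi (S.filter fun i => q (j+1) ≤ g i) = A j / B j := rfl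
    show H.phi (S.filter fun i => q (j+1) ≤ g i) ≤ ν / μ
    rw [hphi, div_le_div_iff₀ hBpos hμ]
    linarith [hle]
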